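/- Let Γ be a finite bipartite graph with bipartition {U, W}, and let Σ be a finite graph admitting a nontrivial TF-morphism (α, β). Define permutations κ and τ on V(Γ) × V(Σ) by (a,x)^κ = (a, x^α) if a ∈ U and (a, x^β) if a ∈ W, and (a,x)^τ = (a, x^β) if a ∈ U and (a, x^α) if a ∈ W. Then (κ, τ) is a nontrivial TF-morphism of the Cartesian product Γ □ Σ. -/
import Mathlib


def IsTF {V : Type*} (G : SimpleGraph V) (α β : Equiv.Perm V) : Prop :=
  ∀ u v : V, G.Adj u v → G.Adj (α u) (β v)

def IsTFS {V : Type*} (G : SimpleGraph V) (α β : Equiv.Perm V) : Prop :=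
  (∀ u : V, G.Adj (α u) (β u)) ∧
    ∀ u v : V, G.Adj u v → G.Adj (α u) (β v) ∨ α u = β v

theorem stmt10 {V W : Type*} [Fintype V] [Fintype W] [Nonempty V]
    (G : SimpleGraph V) (H : SimpleGraph W)
    (U X : Set V)
    (hpart : ∀ v : V, (v ∈ U ∧ v ∉ X) ∨ (v ∈ X ∧ v ∉ U))
    (hedge : ∀ u v : V, G.Adj u v → (u ∈ U ∧ v ∈ X) ∨ (u ∈ X ∧ v ∈ U))
    (α β : Equiv.Perm W) (hTF : IsTF H α β) (hne : α ≠ β)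
    (κ τ : Equiv.Perm (V × W))
    (hκU : ∀ a ∈ U, ∀ x : W, κ (a, x) = (a, α x))
    (hκX : ∀ a ∈ X, ∀ x : W, κ (a, x) = (a, β x))
    (hτU : ∀ a ∈ U, ∀ x : W, τ (a, x) = (a, β x))
    (hτX : ∀ a ∈ X, ∀ x : W, τ (a, x) = (a, α x)) :
    IsTF (G □ H) κ τ ∧ κ ≠ τ := by
  constructor
  · rintro ⟨a, x⟩ ⟨b, y⟩ hadj
    rw [SimpleGraph.boxProd_adj] at hadj
    rcases hadj with ⟨hab, hxy⟩ | ⟨hxy, hab⟩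
    swap
    · dsimp at hab; subst hab
      rcases hpart a with ⟨hU, _⟩ | ⟨hX, _⟩
      · rw [hκU a hU, hτU a hU, SimpleGraph.boxProd_adj]
        exact Or.inr ⟨hTF _ _ hxy, rfl⟩
      · rw [hκX a hX, hτX a hX, SimpleGraph.boxProd_adj]
        exact Or.inr ⟨(hTF _ _ hxy.symm).symm, rfl⟩
    dsimp at hxy; subst hxy
    rcases hedge a b hab with ⟨haU, hbX⟩ | ⟨haX, hbU⟩
    · rw [hκU a haU, hτX b hbX, SimpleGraph.boxProd_adj]
      exact Or.inl ⟨hab, rfl⟩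
    · rw [hκX a haX, hτU b hbU, SimpleGraph.boxProd_adj]
      exact Or.inl ⟨hab, rfl⟩
  · intro h
    obtain ⟨x, hx⟩ : ∃ x, α x ≠ β x := by
      by_contra hc
      push_neg at hc
      exact hne (Equiv.ext hc)
    obtain ⟨a⟩ := ‹Nonempty V›
    rcases hpart a with ⟨hU, _⟩ | ⟨hX, _⟩
    · have := hκU a hU x
      rw [h, hτU a hU x] at this
      exact hx (congrArg Prod.snd this).symm
    · have := hκX a hX x
      rw [h, hτX a hX x] at this
      exact hx (congrArg Prod.snd this)
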